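/- Let K be a category, let u be an inductive sequence of length κ in K (κ an infinite cardinal), and let S ⊆ κ be unbounded in κ. Then: (a) if u is a Fraïssé sequence in K, then the restricted sequence u↾S (indexed by S with the induced bonding arrows) is a Fraïssé sequence in K; (b) if K has the amalgamation property and u↾S is a Fraïssé sequence in K, then u is a Fraïssé sequence in K. -/

import Mathlib

open CategoryTheory

universe w v u

/-- The index set of ordinals below `κ`, used to index inductive sequences of length `κ`. -/
abbrev Idx (κ : Ordinal.{w}) : Type (w + 1) := {ξ : Ordinal.{w} // ξ < κ}

/-- An inductive sequence indexed by a preorder `I` is a Fraïssé sequence if it is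
cofinal (U) and has the amalgamation property (A). -/
def IsFraisseSeq {C : Type u} [Category.{v} C] {I : Type*} [Preorder I] (F : I ⥤ C) : Prop :=
  (∀ x : C, ∃ ξ : I, Nonempty (x ⟶ F.obj ξ)) ∧
  (∀ (ξ : I) (y : C) (f : F.obj ξ ⟶ y),
    ∃ (η : I) (h : ξ ≤ η) (g : y ⟶ F.obj η), f ≫ g = F.map (homOfLE h))

/-- The amalgamation property of a category. -/
def AmalgProp (C : Type u) [Category.{v} C] : Prop :=
  ∀ (a b c : C) (f : a ⟶ b) (g : a ⟶ c),
    ∃ (d : C) (f' : b ⟶ d) (g' : c ⟶ d), f ≫ f' = g ≫ g'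

/-- The restriction of a sequence `u` to a subset `S` of its index set, with the induced
bonding arrows. -/
def restrictSeq {C : Type u} [Category.{v} C] {κ : Ordinal.{w}} (u : Idx κ ⥤ C)
    (S : Set (Idx κ)) : S ⥤ C :=
  (Monotone.functor (f := (Subtype.val : S → Idx κ)) fun _ _ h => h) ⋙ u

/-- for `u` an inductive sequence of length `κ` (an infinite cardinal) and
`S ⊆ κ` unbounded: (a) if `u` is Fraïssé then so is `u ↾ S`; (b) if `K` has the amalgamation
property and `u ↾ S` is Fraïssé, then so is `u`. -/
theorem restrictSeq_isFraisse_iff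
    {C : Type u} [Category.{v} C] (κ : Cardinal.{w}) (hκ : Cardinal.aleph0 ≤ κ)
    (u : Idx κ.ord ⥤ C) (S : Set (Idx κ.ord))
    (hS : ∀ ξ : Idx κ.ord, ∃ η ∈ S, ξ ≤ η) :
    (IsFraisseSeq u → IsFraisseSeq (restrictSeq u S)) ∧
    (AmalgProp C → IsFraisseSeq (restrictSeq u S) → IsFraisseSeq u) := by
  constructor
  · rintro ⟨hU, hA⟩
    constructor
    · intro x
      obtain ⟨ξ, ⟨f⟩⟩ := hU x
      obtain ⟨η, hη, hle⟩ := hS ξ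
      exact ⟨⟨η, hη⟩, ⟨f ≫ u.map (homOfLE hle)⟩⟩
    · rintro ⟨ξ, hξ⟩ y f
      obtain ⟨η, hle, g, hg⟩ := hA ξ y f
      obtain ⟨ζ, hζ, hle2⟩ := hS η
      refine ⟨⟨ζ, hζ⟩, hle.trans hle2, g ≫ u.map (homOfLE hle2), ?_⟩
      show f ≫ (g ≫ u.map (homOfLE hle2)) = u.map (homOfLE _)
      erw [← Category.assoc, hg, ← u.map_comp]
      rfl
  · rintro hAP ⟨hU, hA⟩
    constructor
    · intro x
      obtain ⟨⟨ξ, hξ⟩, ⟨f⟩⟩ := hU x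
      exact ⟨ξ, ⟨f⟩⟩
    · intro ξ y f
      obtain ⟨η, hη, hle⟩ := hS ξ
      obtain ⟨d, f', g', hfg⟩ := hAP _ _ _ f (u.map (homOfLE hle))
      obtain ⟨⟨ζ, hζ⟩, hle2, g, hg⟩ := hA ⟨η, hη⟩ d g'
      refine ⟨ζ, hle.trans hle2, f' ≫ g, ?_⟩
      have hg' : g' ≫ g = u.map (homOfLE (show η ≤ ζ from hle2)) := hg
      erw [← Category.assoc, hfg, Category.assoc, hg', ← u.map_comp]
      rfl
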